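/- Let G be a bipartite graph on vertex classes of sizes v ≤ w with e edges, of girth at least 6 (no 4-cycle). Then e^2 - we - vw(v-1) ≤ 0, and hence e ≤ √(vw(v-1) + w^2/4) + w/2. -/

import Mathlib

open Finset SimpleGraph

lemma four_cycle_exists {α : Type*} (G : SimpleGraph α) {x1 x2 y1 y2 : α}
    (hx : x1 ≠ x2) (hy : y1 ≠ y2)
    (h11 : x1 ≠ y1) (h12 : x1 ≠ y2) (h21 : x2 ≠ y1) (h22 : x2 ≠ y2)
    (a1 : G.Adj x1 y1) (a2 : G.Adj y1 x2) (a3 : G.Adj x2 y2) (a4 : G.Adj y2 x1) :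
    ∃ c : G.Walk x1 x1, c.IsCycle ∧ c.length = 4 := by
  refine ⟨Walk.cons a1 (Walk.cons a2 (Walk.cons a3 (Walk.cons a4 Walk.nil))), ?_, rfl⟩
  rw [Walk.isCycle_def]
  refine ⟨?_, by simp, ?_⟩
  · rw [Walk.isTrail_def]
    simp only [Walk.edges_cons, Walk.edges_nil, List.nodup_cons, List.mem_cons,
      List.not_mem_nil, or_false, List.nodup_nil, and_true, Sym2.eq, Sym2.rel_iff',
      Prod.mk.injEq, Prod.swap_prod_mk]
    push_neg
    tauto
  · simp only [Walk.support_cons, Walk.support_nil, List.tail_cons, List.nodup_cons,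
      List.mem_cons, List.not_mem_nil, or_false, List.nodup_nil, and_true, List.mem_singleton]
    push_neg
    tauto

theorem stmt_6 (v w : ℕ) (hvw : v ≤ w) (G : SimpleGraph (Fin v ⊕ Fin w)) [DecidableRel G.Adj]
    (hbip : ∀ x y, G.Adj x y → x.isLeft ≠ y.isLeft)
    (h4 : ∀ (x) (c : G.Walk x x), c.IsCycle → c.length ≠ 4)
    (e : ℕ) (he : e = G.edgeFinset.card) :
    (e : ℝ)^2 - w * e - v * w * (v - 1) ≤ 0 ∧
      (e : ℝ) ≤ Real.sqrt (v * w * (v - 1) + w^2 / 4) + w / 2 := by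
  classical
  set N : Fin w → Finset (Fin v) :=
    fun b => univ.filter (fun a => G.Adj (Sum.inr b) (Sum.inl a)) with hN
  set d : Fin w → ℕ := fun b => (N b).card with hd
  -- neighbor finsets
  have hnbR : ∀ b : Fin w, G.neighborFinset (Sum.inr b) = (N b).image Sum.inl := by
    intro b
    ext x
    cases x with
    | inl a => simp [hN, mem_neighborFinset]
    | inr b' =>
      simp only [mem_neighborFinset, hN, mem_image, mem_filter, mem_univ, true_and]
      constructor
      · intro h; exact absurd (hbip _ _ h) (by simp)
      · rintro ⟨a, _, h⟩; exact absurd h (by simp)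
  have hnbL : ∀ a : Fin v, G.neighborFinset (Sum.inl a) =
      (univ.filter (fun b => G.Adj (Sum.inl a) (Sum.inr b))).image Sum.inr := by
    intro a
    ext x
    cases x with
    | inr b => simp [mem_neighborFinset]
    | inl a' =>
      simp only [mem_neighborFinset, mem_image, mem_filter, mem_univ, true_and]
      constructor
      · intro h; exact absurd (hbip _ _ h) (by simp)
      · rintro ⟨b, _, h⟩; exact absurd h (by simp)
  -- sum of right degrees = e
  have hsum : ∑ b, d b = e := by
    have h2 : ∑ x, G.degree x = 2 * e := by rw [he]; exact G.sum_degrees_eq_twice_card_edges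
    rw [Fintype.sum_sum_type] at h2
    have hL : ∀ a : Fin v, G.degree (Sum.inl a) =
        ∑ b : Fin w, if G.Adj (Sum.inl a) (Sum.inr b) then 1 else 0 := by
      intro a
      rw [← card_neighborFinset_eq_degree, hnbL a,
        card_image_of_injective _ Sum.inr_injective, Finset.card_filter]
    have hR : ∀ b : Fin w, G.degree (Sum.inr b) =
        ∑ a : Fin v, if G.Adj (Sum.inl a) (Sum.inr b) then 1 else 0 := by
      intro b
      rw [← card_neighborFinset_eq_degree, hnbR b,
        card_image_of_injective _ Sum.inl_injective, hN, Finset.card_filter]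
      simp_rw [G.adj_comm]
    have hdeg : ∀ b : Fin w, d b = G.degree (Sum.inr b) := by
      intro b
      rw [← card_neighborFinset_eq_degree, hnbR b, card_image_of_injective _ Sum.inl_injective]
    have heq : ∑ a : Fin v, G.degree (Sum.inl a) = ∑ b : Fin w, G.degree (Sum.inr b) := by
      simp_rw [hL, hR]
      exact Finset.sum_comm
    have : ∑ b, d b = ∑ b : Fin w, G.degree (Sum.inr b) := by simp_rw [hdeg]
    omega
  -- key: no 4-cycle bound
  have hkey : ∑ b, (d b * d b - d b) ≤ v * v - v := by
    have hc : ∑ b, (d b * d b - d b) = (univ.sigma fun b => (N b).offDiag).card := by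
      rw [Finset.card_sigma]
      exact Finset.sum_congr rfl fun b _ => (Finset.offDiag_card _).symm
    rw [hc]
    have := Finset.card_le_card_of_injOn (fun p : (Σ _ : Fin w, Fin v × Fin v) => p.2)
      (s := univ.sigma fun b => (N b).offDiag) (t := (univ : Finset (Fin v)).offDiag)
      ?_ ?_
    · calc _ ≤ (univ : Finset (Fin v)).offDiag.card := this
        _ = v * v - v := by rw [Finset.offDiag_card]; simp
    · rintro ⟨b, a1, a2⟩ hp
      simp only [Finset.mem_coe, Finset.mem_sigma, Finset.mem_offDiag, mem_univ, true_and, hN,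
        mem_filter] at hp ⊢
      exact hp.2.2
    · rintro ⟨b, a1, a2⟩ hp ⟨b', a1', a2'⟩ hq hpq
      simp only at hpq
      obtain ⟨rfl, rfl⟩ : a1 = a1' ∧ a2 = a2' := Prod.mk.injEq .. ▸ Prod.ext_iff.mp hpq
      simp only [Finset.mem_coe, Finset.mem_sigma, Finset.mem_offDiag, hN, mem_filter,
        mem_univ, true_and] at hp hq
      by_contra hbb
      have hbne : b ≠ b' := fun h => hbb (by subst h; rfl)
      obtain ⟨c, hc, hlen⟩ := four_cycle_exists G
        (x1 := Sum.inl a1) (x2 := Sum.inl a2) (y1 := Sum.inr b) (y2 := Sum.inr b')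
        (by simpa using hp.2.2) (by simpa using hbne)
        (by simp) (by simp) (by simp) (by simp)
        hp.1.symm hp.2.1 hq.2.1.symm hq.1
      exact h4 _ c hc hlen
  -- sum of squares bound
  have hsq : ∑ b, d b * d b ≤ (v * v - v) + e := by
    have : ∑ b, d b * d b = ∑ b, (d b * d b - d b) + ∑ b, d b := by
      rw [← Finset.sum_add_distrib]
      refine Finset.sum_congr rfl fun b _ => ?_
      rcases Nat.eq_zero_or_pos (d b) with h | h
      · omega
      · have := Nat.le_mul_of_pos_left (d b) h
        omega
    rw [this, hsum]
    omega
  -- cast facts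
  have hle : v ≤ v * v := by
    cases v with
    | zero => simp
    | succ n => exact Nat.le_mul_of_pos_left _ (Nat.succ_pos n)
  have hvv : ((v * v - v : ℕ) : ℝ) = (v : ℝ) * v - v := by
    push_cast [Nat.cast_sub hle]; ring
  -- Cauchy-Schwarz
  have hcs : ((e : ℝ))^2 ≤ w * (((v * v - v : ℕ) : ℝ) + e) := by
    have h1 : ((e : ℝ)) = ∑ b, (d b : ℝ) := by rw [← hsum]; push_cast; rfl
    calc (e : ℝ)^2 = (∑ b, (d b : ℝ))^2 := by rw [h1]
      _ ≤ (univ : Finset (Fin w)).card * ∑ b, (d b : ℝ)^2 := sq_sum_le_card_mul_sum_sq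
      _ = w * ∑ b, (d b : ℝ)^2 := by simp
      _ ≤ w * (((v * v - v : ℕ) : ℝ) + e) := by
          have h2 : ∑ b, (d b : ℝ)^2 = ((∑ b, d b * d b : ℕ) : ℝ) := by
            push_cast; exact Finset.sum_congr rfl fun b _ => by ring
          rw [h2]
          have h3 : ((∑ b, d b * d b : ℕ) : ℝ) ≤ ((v * v - v : ℕ) : ℝ) + e := by
            rw [← Nat.cast_add]; exact_mod_cast hsq
          exact mul_le_mul_of_nonneg_left h3 (Nat.cast_nonneg w)
  have hg1 : (e : ℝ)^2 - w * e - v * w * ((v : ℝ) - 1) ≤ 0 := by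
    rw [hvv] at hcs
    ring_nf at hcs ⊢
    linarith
  refine ⟨hg1, ?_⟩
  have hR0 : (0 : ℝ) ≤ (v : ℝ) * w * ((v : ℝ) - 1) := by
    have h0 : (0 : ℝ) ≤ ((v * v - v : ℕ) : ℝ) := Nat.cast_nonneg _
    rw [hvv] at h0
    have hw0 : (0 : ℝ) ≤ w := Nat.cast_nonneg w
    nlinarith
  rcases le_or_gt (e : ℝ) ((w : ℝ) / 2) with h | h
  · have := Real.sqrt_nonneg ((v : ℝ) * w * ((v : ℝ) - 1) + (w : ℝ)^2 / 4)
    linarith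
  · have hsq2 : ((e : ℝ) - w / 2)^2 ≤ (v : ℝ) * w * ((v : ℝ) - 1) + (w : ℝ)^2 / 4 := by
      nlinarith
    have hs := Real.sqrt_le_sqrt hsq2
    rw [Real.sqrt_sq (by linarith)] at hs
    linarith
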